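/- arXiv:1502.04197 — 2 statements merged into one kernel-verified Lean document; each statement's English description precedes it below -/
import Mathlib

section
/- Let a>0, σ>1, ρ ∈ ℝ, and define the Lei-Lin-Gevrey norm ‖f‖_{Z^ρ_{a,σ}} = ∫_{ℝ³} |ξ|^ρ e^{a|ξ|^{1/σ}} |f̂(ξ)| dξ. If f and g are tempered distributions with ‖f‖_{Z^{-1}_{a,σ}}, ‖f‖_{Z^{1}_{a,σ}}, ‖g‖_{Z^{-1}_{a,σ}}, ‖g‖_{Z^{1}_{a,σ}} all finite, then ‖fg‖_{Z^{0}_{a,σ}} ≤ ‖f‖_{Z^{-1}_{a,σ}} ‖g‖_{Z^{1}_{a,σ}} + ‖f‖_{Z^{1}_{a,σ}} ‖g‖_{Z^{-1}_{a,σ}}. -/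
open MeasureTheory Real

set_option maxHeartbeats 1000000 in
/-- Product law in Lei-Lin-Gevrey spaces, stated on the Fourier side:
`f` and `g` stand for the Fourier transforms `f̂`, `ĝ`, and the Fourier
transform of the product is (up to normalization) the convolution `f * g`. -/
theorem gevrey_product_law (a σ : ℝ) (ha : 0 < a) (hσ : 1 < σ)
    (f g : EuclideanSpace ℝ (Fin 3) → ℂ) (hfm : Measurable f) (hgm : Measurable g)
    (hf1 : Integrable fun ξ => ‖ξ‖⁻¹ * Real.exp (a * ‖ξ‖ ^ (1 / σ)) * ‖f ξ‖)
    (hf2 : Integrable fun ξ => ‖ξ‖ * Real.exp (a * ‖ξ‖ ^ (1 / σ)) * ‖f ξ‖)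
    (hg1 : Integrable fun ξ => ‖ξ‖⁻¹ * Real.exp (a * ‖ξ‖ ^ (1 / σ)) * ‖g ξ‖)
    (hg2 : Integrable fun ξ => ‖ξ‖ * Real.exp (a * ‖ξ‖ ^ (1 / σ)) * ‖g ξ‖) :
    ∫ ξ, Real.exp (a * ‖ξ‖ ^ (1 / σ)) * ‖∫ η, f (ξ - η) * g η‖ ≤
      (∫ ξ, ‖ξ‖⁻¹ * Real.exp (a * ‖ξ‖ ^ (1 / σ)) * ‖f ξ‖) *
        (∫ ξ, ‖ξ‖ * Real.exp (a * ‖ξ‖ ^ (1 / σ)) * ‖g ξ‖) +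
      (∫ ξ, ‖ξ‖ * Real.exp (a * ‖ξ‖ ^ (1 / σ)) * ‖f ξ‖) *
        (∫ ξ, ‖ξ‖⁻¹ * Real.exp (a * ‖ξ‖ ^ (1 / σ)) * ‖g ξ‖) := by
  have hσ0 : (0:ℝ) < σ := by linarith
  have hp0 : (0:ℝ) ≤ 1 / σ := by positivity
  have hp1 : (1:ℝ) / σ ≤ 1 := by
    rw [div_le_one hσ0]; linarith
  set w : EuclideanSpace ℝ (Fin 3) → ℝ := fun ξ => Real.exp (a * ‖ξ‖ ^ (1 / σ)) with hw
  have hwpos : ∀ ξ : EuclideanSpace ℝ (Fin 3), 0 < w ξ := fun ξ => Real.exp_pos _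
  have hwc : Continuous w :=
    Real.continuous_exp.comp (continuous_const.mul
      (continuous_norm.rpow_const fun x => Or.inr hp0))
  -- subadditivity of t ↦ t ^ (1/σ)
  have subadd : ∀ x y : ℝ, 0 ≤ x → 0 ≤ y → (x + y) ^ (1/σ) ≤ x ^ (1/σ) + y ^ (1/σ) := by
    intro x y hx hy
    have h := NNReal.rpow_add_le_add_rpow x.toNNReal y.toNNReal hp0 hp1
    rw [← Real.toNNReal_add hx hy] at h
    have := NNReal.coe_le_coe.2 h
    push_cast [NNReal.coe_rpow, Real.coe_toNNReal _ (add_nonneg hx hy),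
      Real.coe_toNNReal _ hx, Real.coe_toNNReal _ hy] at this
    exact this
  -- weight submultiplicativity
  have hW : ∀ ξ η : EuclideanSpace ℝ (Fin 3), w ξ ≤ w (ξ - η) * w η := by
    intro ξ η
    rw [hw]
    simp only
    rw [← Real.exp_add]
    apply Real.exp_le_exp.2
    rw [← mul_add]
    refine mul_le_mul_of_nonneg_left ?_ ha.le
    calc ‖ξ‖ ^ (1/σ) ≤ (‖ξ - η‖ + ‖η‖) ^ (1/σ) := by
          apply Real.rpow_le_rpow (norm_nonneg _) _ hp0
          simpa using norm_add_le (ξ - η) η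
      _ ≤ ‖ξ - η‖ ^ (1/σ) + ‖η‖ ^ (1/σ) := subadd _ _ (norm_nonneg _) (norm_nonneg _)
  -- elementary inequality
  have key : ∀ s t : ℝ, 0 < s → 0 < t → 1 ≤ s⁻¹ * t + s * t⁻¹ := by
    intro s t hs ht
    have heq : s⁻¹ * t + s * t⁻¹ = (t * t + s * s) / (s * t) := by
      field_simp
    rw [heq, le_div_iff₀ (by positivity)]
    nlinarith [sq_nonneg (s - t)]
  -- the four weighted functions
  set F1 : EuclideanSpace ℝ (Fin 3) → ℝ := fun ξ => ‖ξ‖⁻¹ * w ξ * ‖f ξ‖ with hF1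
  set F2 : EuclideanSpace ℝ (Fin 3) → ℝ := fun ξ => ‖ξ‖ * w ξ * ‖f ξ‖ with hF2
  set G1 : EuclideanSpace ℝ (Fin 3) → ℝ := fun ξ => ‖ξ‖⁻¹ * w ξ * ‖g ξ‖ with hG1
  set G2 : EuclideanSpace ℝ (Fin 3) → ℝ := fun ξ => ‖ξ‖ * w ξ * ‖g ξ‖ with hG2
  have hF1m : Measurable F1 :=
    ((measurable_norm.inv).mul hwc.measurable).mul hfm.norm
  have hF2m : Measurable F2 := (measurable_norm.mul hwc.measurable).mul hfm.norm
  have hG1m : Measurable G1 :=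
    ((measurable_norm.inv).mul hwc.measurable).mul hgm.norm
  have hG2m : Measurable G2 := (measurable_norm.mul hwc.measurable).mul hgm.norm
  -- pointwise inequality off a null set
  have hpt : ∀ ξ η : EuclideanSpace ℝ (Fin 3), η ≠ 0 → ξ - η ≠ 0 →
      w ξ * (‖f (ξ - η)‖ * ‖g η‖) ≤ F1 (ξ - η) * G2 η + F2 (ξ - η) * G1 η := by
    intro ξ η hη hξη
    have hs : (0:ℝ) < ‖ξ - η‖ := norm_pos_iff.2 hξη
    have ht : (0:ℝ) < ‖η‖ := norm_pos_iff.2 hη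
    have h1 : w ξ * (‖f (ξ - η)‖ * ‖g η‖) ≤
        (w (ξ - η) * w η) * (‖f (ξ - η)‖ * ‖g η‖) :=
      mul_le_mul_of_nonneg_right (hW ξ η) (by positivity)
    have h2 : (w (ξ - η) * w η) * (‖f (ξ - η)‖ * ‖g η‖) ≤
        (w (ξ - η) * w η) * (‖f (ξ - η)‖ * ‖g η‖) *
          (‖ξ - η‖⁻¹ * ‖η‖ + ‖ξ - η‖ * ‖η‖⁻¹) := by
      have := key _ _ hs ht
      have hM : 0 ≤ (w (ξ - η) * w η) * (‖f (ξ - η)‖ * ‖g η‖) := by positivity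
      nlinarith
    have h3 : (w (ξ - η) * w η) * (‖f (ξ - η)‖ * ‖g η‖) *
          (‖ξ - η‖⁻¹ * ‖η‖ + ‖ξ - η‖ * ‖η‖⁻¹) =
        F1 (ξ - η) * G2 η + F2 (ξ - η) * G1 η := by
      rw [hF1, hF2, hG1, hG2]; ring
    linarith
  -- measurability of the various ENNReal integrands
  have hF1G2m : Measurable (Function.uncurry fun ξ η : EuclideanSpace ℝ (Fin 3) =>
      ENNReal.ofReal (F1 (ξ - η)) * ENNReal.ofReal (G2 η)) :=
    (ENNReal.measurable_ofReal.comp (hF1m.comp (measurable_fst.sub measurable_snd))).mul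
      (ENNReal.measurable_ofReal.comp (hG2m.comp measurable_snd))
  have hF2G1m : Measurable (Function.uncurry fun ξ η : EuclideanSpace ℝ (Fin 3) =>
      ENNReal.ofReal (F2 (ξ - η)) * ENNReal.ofReal (G1 η)) :=
    (ENNReal.measurable_ofReal.comp (hF2m.comp (measurable_fst.sub measurable_snd))).mul
      (ENNReal.measurable_ofReal.comp (hG1m.comp measurable_snd))
  -- convolution identity for lintegrals
  have conv_eq : ∀ (F G : EuclideanSpace ℝ (Fin 3) → ℝ), Measurable F → Measurable G →
      (∫⁻ ξ, ∫⁻ η, ENNReal.ofReal (F (ξ - η)) * ENNReal.ofReal (G η)) =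
      (∫⁻ ξ, ENNReal.ofReal (F ξ)) * ∫⁻ η, ENNReal.ofReal (G η) := by
    intro F G hF hG
    rw [lintegral_lintegral_swap
      (((ENNReal.measurable_ofReal.comp (hF.comp (measurable_fst.sub measurable_snd))).mul
        (ENNReal.measurable_ofReal.comp (hG.comp measurable_snd))).aemeasurable)]
    have h1 : ∀ η : EuclideanSpace ℝ (Fin 3),
        (∫⁻ ξ, ENNReal.ofReal (F (ξ - η)) * ENNReal.ofReal (G η)) =
        (∫⁻ ξ, ENNReal.ofReal (F ξ)) * ENNReal.ofReal (G η) := by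
      intro η
      rw [lintegral_mul_const' _ _ ENNReal.ofReal_ne_top,
        lintegral_sub_right_eq_self (fun ξ => ENNReal.ofReal (F ξ)) η]
    simp_rw [h1]
    exact lintegral_const_mul _ hG.ennreal_ofReal
  -- nonnegativity
  have hF1n : ∀ ξ, 0 ≤ F1 ξ := fun ξ =>
    mul_nonneg (mul_nonneg (inv_nonneg.2 (norm_nonneg _)) (hwpos _).le) (norm_nonneg _)
  have hF2n : ∀ ξ, 0 ≤ F2 ξ := fun ξ =>
    mul_nonneg (mul_nonneg (norm_nonneg _) (hwpos _).le) (norm_nonneg _)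
  have hG1n : ∀ ξ, 0 ≤ G1 ξ := fun ξ =>
    mul_nonneg (mul_nonneg (inv_nonneg.2 (norm_nonneg _)) (hwpos _).le) (norm_nonneg _)
  have hG2n : ∀ ξ, 0 ≤ G2 ξ := fun ξ =>
    mul_nonneg (mul_nonneg (norm_nonneg _) (hwpos _).le) (norm_nonneg _)
  have hF1l : ∫⁻ ξ, ENNReal.ofReal (F1 ξ) = ENNReal.ofReal (∫ ξ, F1 ξ) :=
    (ofReal_integral_eq_lintegral_ofReal hf1 (Filter.Eventually.of_forall hF1n)).symm
  have hF2l : ∫⁻ ξ, ENNReal.ofReal (F2 ξ) = ENNReal.ofReal (∫ ξ, F2 ξ) :=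
    (ofReal_integral_eq_lintegral_ofReal hf2 (Filter.Eventually.of_forall hF2n)).symm
  have hG1l : ∫⁻ ξ, ENNReal.ofReal (G1 ξ) = ENNReal.ofReal (∫ ξ, G1 ξ) :=
    (ofReal_integral_eq_lintegral_ofReal hg1 (Filter.Eventually.of_forall hG1n)).symm
  have hG2l : ∫⁻ ξ, ENNReal.ofReal (G2 ξ) = ENNReal.ofReal (∫ ξ, G2 ξ) :=
    (ofReal_integral_eq_lintegral_ofReal hg2 (Filter.Eventually.of_forall hG2n)).symm
  -- measurability of the convolution
  have hconvm : Measurable fun ξ : EuclideanSpace ℝ (Fin 3) => ∫ η, f (ξ - η) * g η := by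
    have h : StronglyMeasurable fun p : EuclideanSpace ℝ (Fin 3) × EuclideanSpace ℝ (Fin 3) =>
        f (p.1 - p.2) * g p.2 :=
      ((hfm.comp (measurable_fst.sub measurable_snd)).mul (hgm.comp measurable_snd)).stronglyMeasurable
    exact h.integral_prod_right'.measurable
  -- express LHS via a lintegral
  have step1 : (∫ ξ, w ξ * ‖∫ η, f (ξ - η) * g η‖) =
      (∫⁻ ξ, ENNReal.ofReal (w ξ * ‖∫ η, f (ξ - η) * g η‖)).toReal := by
    rw [integral_eq_lintegral_of_nonneg_ae
      (Filter.Eventually.of_forall fun ξ => mul_nonneg (hwpos ξ).le (norm_nonneg _))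
      ((hwc.measurable.mul hconvm.norm).aestronglyMeasurable)]
  -- pointwise bound of the lintegrand
  have step2 : ∀ ξ : EuclideanSpace ℝ (Fin 3),
      ENNReal.ofReal (w ξ * ‖∫ η, f (ξ - η) * g η‖) ≤
      ∫⁻ η, ENNReal.ofReal (w ξ * (‖f (ξ - η)‖ * ‖g η‖)) := by
    intro ξ
    calc ENNReal.ofReal (w ξ * ‖∫ η, f (ξ - η) * g η‖)
        = ENNReal.ofReal (w ξ) * ‖∫ η, f (ξ - η) * g η‖₊ := by
          rw [ENNReal.ofReal_mul (hwpos ξ).le, ofReal_norm, enorm_eq_nnnorm]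
      _ ≤ ENNReal.ofReal (w ξ) * ∫⁻ η, ‖f (ξ - η) * g η‖₊ :=
          mul_le_mul_right (enorm_integral_le_lintegral_enorm _) _
      _ = ∫⁻ η, ENNReal.ofReal (w ξ * (‖f (ξ - η)‖ * ‖g η‖)) := by
          rw [← lintegral_const_mul' _ _ ENNReal.ofReal_ne_top]
          congr 1
          ext η
          rw [ENNReal.ofReal_mul (hwpos ξ).le, ← enorm_eq_nnnorm, ← ofReal_norm, norm_mul]
  have step3 : ∀ ξ : EuclideanSpace ℝ (Fin 3),
      (∫⁻ η, ENNReal.ofReal (w ξ * (‖f (ξ - η)‖ * ‖g η‖))) ≤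
      ∫⁻ η, (ENNReal.ofReal (F1 (ξ - η)) * ENNReal.ofReal (G2 η) +
        ENNReal.ofReal (F2 (ξ - η)) * ENNReal.ofReal (G1 η)) := by
    intro ξ
    refine lintegral_mono_ae ?_
    have h0 : ∀ᵐ η : EuclideanSpace ℝ (Fin 3), η ≠ 0 := by
      rw [ae_iff]
      have : {η : EuclideanSpace ℝ (Fin 3) | ¬η ≠ 0} = {0} := by ext η; simp
      rw [this]
      exact measure_singleton _
    have h1 : ∀ᵐ η : EuclideanSpace ℝ (Fin 3), ξ - η ≠ 0 := by
      rw [ae_iff]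
      have : {η : EuclideanSpace ℝ (Fin 3) | ¬ξ - η ≠ 0} = {ξ} := by
        ext η; simp [sub_eq_zero, eq_comm]
      rw [this]
      exact measure_singleton _
    filter_upwards [h0, h1] with η hη hξη
    calc ENNReal.ofReal (w ξ * (‖f (ξ - η)‖ * ‖g η‖))
        ≤ ENNReal.ofReal (F1 (ξ - η) * G2 η + F2 (ξ - η) * G1 η) :=
          ENNReal.ofReal_le_ofReal (hpt ξ η hη hξη)
      _ ≤ ENNReal.ofReal (F1 (ξ - η) * G2 η) + ENNReal.ofReal (F2 (ξ - η) * G1 η) :=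
          ENNReal.ofReal_add_le
      _ = ENNReal.ofReal (F1 (ξ - η)) * ENNReal.ofReal (G2 η) +
          ENNReal.ofReal (F2 (ξ - η)) * ENNReal.ofReal (G1 η) := by
          rw [ENNReal.ofReal_mul (hF1n _), ENNReal.ofReal_mul (hF2n _)]
  -- the full lintegral bound
  have hL : (∫⁻ ξ, ENNReal.ofReal (w ξ * ‖∫ η, f (ξ - η) * g η‖)) ≤
      ENNReal.ofReal ((∫ ξ, F1 ξ) * (∫ ξ, G2 ξ) + (∫ ξ, F2 ξ) * (∫ ξ, G1 ξ)) := by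
    have c1 : (∫⁻ ξ, ENNReal.ofReal (w ξ * ‖∫ η, f (ξ - η) * g η‖)) ≤
        ∫⁻ ξ, ∫⁻ η, (ENNReal.ofReal (F1 (ξ - η)) * ENNReal.ofReal (G2 η) +
          ENNReal.ofReal (F2 (ξ - η)) * ENNReal.ofReal (G1 η)) :=
      lintegral_mono fun ξ => (step2 ξ).trans (step3 ξ)
    have c2 : (∫⁻ ξ, ∫⁻ η, (ENNReal.ofReal (F1 (ξ - η)) * ENNReal.ofReal (G2 η) +
          ENNReal.ofReal (F2 (ξ - η)) * ENNReal.ofReal (G1 η))) =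
        ∫⁻ ξ, ((∫⁻ η, ENNReal.ofReal (F1 (ξ - η)) * ENNReal.ofReal (G2 η)) +
          ∫⁻ η, ENNReal.ofReal (F2 (ξ - η)) * ENNReal.ofReal (G1 η)) :=
      lintegral_congr fun ξ => lintegral_add_left ((ENNReal.measurable_ofReal.comp
        (hF1m.comp (measurable_const.sub measurable_id))).mul
        (ENNReal.measurable_ofReal.comp hG2m)) _
    have c3 : (∫⁻ ξ, ((∫⁻ η, ENNReal.ofReal (F1 (ξ - η)) * ENNReal.ofReal (G2 η)) +
          ∫⁻ η, ENNReal.ofReal (F2 (ξ - η)) * ENNReal.ofReal (G1 η))) =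
        (∫⁻ ξ, ∫⁻ η, ENNReal.ofReal (F1 (ξ - η)) * ENNReal.ofReal (G2 η)) +
          ∫⁻ ξ, ∫⁻ η, ENNReal.ofReal (F2 (ξ - η)) * ENNReal.ofReal (G1 η) :=
      lintegral_add_left hF1G2m.lintegral_prod_right' _
    have c4 : (∫⁻ ξ, ∫⁻ η, ENNReal.ofReal (F1 (ξ - η)) * ENNReal.ofReal (G2 η)) +
          (∫⁻ ξ, ∫⁻ η, ENNReal.ofReal (F2 (ξ - η)) * ENNReal.ofReal (G1 η)) =
        ENNReal.ofReal ((∫ ξ, F1 ξ) * (∫ ξ, G2 ξ) + (∫ ξ, F2 ξ) * (∫ ξ, G1 ξ)) := by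
      rw [conv_eq F1 G2 hF1m hG2m, conv_eq F2 G1 hF2m hG1m,
        hF1l, hF2l, hG1l, hG2l, ← ENNReal.ofReal_mul (integral_nonneg hF1n),
        ← ENNReal.ofReal_mul (integral_nonneg hF2n),
        ← ENNReal.ofReal_add (mul_nonneg (integral_nonneg hF1n) (integral_nonneg hG2n))
          (mul_nonneg (integral_nonneg hF2n) (integral_nonneg hG1n))]
    calc (∫⁻ ξ, ENNReal.ofReal (w ξ * ‖∫ η, f (ξ - η) * g η‖))
        ≤ _ := c1
      _ = _ := c2
      _ = _ := c3
      _ = _ := c4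
  rw [step1]
  exact ENNReal.toReal_le_of_le_ofReal
    (add_nonneg (mul_nonneg (integral_nonneg hF1n) (integral_nonneg hG2n))
      (mul_nonneg (integral_nonneg hF2n) (integral_nonneg hG1n))) hL
end

section
/- Let a>0, σ>1. There exists c = c_{a,σ} such that for any divergence-free vector field u, ‖u ⊗ u‖_{Z^{0}_{a,σ}} ≤ c ‖u‖_{Z^{-1}_{a/√σ,σ}} ‖u‖_{Z^{-1}_{a,σ}}^{1/2} ‖Δu‖_{Z^{-1}_{a,σ}}^{1/2}. -/
open MeasureTheory Real
open scoped ENNReal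

/-- Key exponent inequality: `(p+q)^s ≤ s p^s + q^s` for `0 ≤ p ≤ q`, `0 < s ≤ 1`. -/
lemma aux_rpow_split {s p q : ℝ} (hs0 : 0 < s) (hs1 : s ≤ 1) (hp : 0 ≤ p) (hpq : p ≤ q) :
    (p + q) ^ s ≤ s * p ^ s + q ^ s := by
  have hq : 0 ≤ q := hp.trans hpq
  rcases eq_or_lt_of_le hq with h0 | hq0
  · have hp0 : p = 0 := le_antisymm (hpq.trans h0.ge) hp
    simp [hp0, ← h0, Real.zero_rpow hs0.ne']
  · have ht0 : 0 ≤ p / q := div_nonneg hp hq0.le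
    have ht1 : p / q ≤ 1 := (div_le_one hq0).mpr hpq
    have key : (1 + p / q) ^ s ≤ 1 + s * (p / q) ^ s := by
      calc (1 + p / q) ^ s ≤ 1 + s * (p / q) :=
            rpow_one_add_le_one_add_mul_self (by linarith) hs0.le hs1
        _ ≤ 1 + s * (p / q) ^ s := by
            gcongr 1 + s * ?_
            rcases eq_or_lt_of_le ht0 with h | h
            · simp [← h, Real.zero_rpow hs0.ne']
            · calc p / q = (p / q) ^ (1 : ℝ) := (Real.rpow_one _).symm
                _ ≤ (p / q) ^ s := Real.rpow_le_rpow_of_exponent_ge h ht1 hs1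
    have hpq_eq : p + q = q * (1 + p / q) := by field_simp; ring
    calc (p + q) ^ s = q ^ s * (1 + p / q) ^ s := by
          rw [hpq_eq, Real.mul_rpow hq0.le (by linarith)]
      _ ≤ q ^ s * (1 + s * (p / q) ^ s) := by
          gcongr
      _ = q ^ s + s * (q ^ s * (p / q) ^ s) := by ring
      _ = q ^ s + s * p ^ s := by
          rw [← Real.mul_rpow hq0.le ht0, mul_div_cancel₀ p hq0.ne']
      _ = s * p ^ s + q ^ s := by ring

/-- Splitting of the Gevrey exponential weight. -/
lemma aux_exp_split {a σ : ℝ} (ha : 0 < a) (hσ : 1 < σ) {r p q : ℝ}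
    (hp : 0 ≤ p) (hq : 0 ≤ q) (hr0 : 0 ≤ r) (hr : r ≤ p + q) :
    Real.exp (a * r ^ (1 / σ)) ≤
      Real.exp ((a / σ) * p ^ (1 / σ)) * Real.exp (a * q ^ (1 / σ)) +
      Real.exp ((a / σ) * q ^ (1 / σ)) * Real.exp (a * p ^ (1 / σ)) := by
  have hs0 : 0 < 1 / σ := by positivity
  have hs1 : 1 / σ ≤ 1 := by
    rw [div_le_one (by linarith)]; linarith
  have main : ∀ p q : ℝ, 0 ≤ p → p ≤ q → r ≤ p + q →
      Real.exp (a * r ^ (1 / σ)) ≤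
        Real.exp ((a / σ) * p ^ (1 / σ)) * Real.exp (a * q ^ (1 / σ)) := by
    intro p q hp hpq hr
    rw [← Real.exp_add]
    apply Real.exp_le_exp.mpr
    have h1 : r ^ (1 / σ) ≤ (p + q) ^ (1 / σ) := Real.rpow_le_rpow hr0 hr hs0.le
    have h2 : (p + q) ^ (1 / σ) ≤ (1 / σ) * p ^ (1 / σ) + q ^ (1 / σ) :=
      aux_rpow_split hs0 hs1 hp hpq
    have := mul_le_mul_of_nonneg_left (h1.trans h2) ha.le
    calc a * r ^ (1 / σ) ≤ a * ((1 / σ) * p ^ (1 / σ) + q ^ (1 / σ)) := this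
      _ = a / σ * p ^ (1 / σ) + a * q ^ (1 / σ) := by ring
  rcases le_total p q with h | h
  · exact (main p q hp h hr).trans (le_add_of_nonneg_right (by positivity))
  · have := main q p hq h (by linarith)
    exact this.trans (le_add_of_nonneg_left (by positivity))

/-- Polynomial growth beaten by stretched exponential. -/
lemma aux_growth {δ s : ℝ} (hδ : 0 < δ) (hs : 0 < s) :
    ∃ c > 0, ∀ t : ℝ, 0 ≤ t → t ≤ c * Real.exp (δ * t ^ s) := by
  set n : ℕ := ⌈1 / s⌉₊ with hn
  have hn1 : 1 ≤ n := Nat.one_le_ceil_iff.mpr (by positivity)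
  have hns : 1 ≤ s * n := by
    have : 1 / s ≤ (n : ℝ) := Nat.le_ceil _
    calc (1:ℝ) = s * (1 / s) := by field_simp
      _ ≤ s * n := by gcongr
  have hnpos : (0:ℝ) < n := by exact_mod_cast hn1
  refine ⟨max 1 ((n / δ) ^ n), lt_max_of_lt_left one_pos, fun t ht => ?_⟩
  rcases le_total t 1 with h1 | h1
  · have h2 : (1:ℝ) ≤ Real.exp (δ * t ^ s) := Real.one_le_exp (by positivity)
    have h3 : (1:ℝ) ≤ max 1 ((n / δ) ^ n) := le_max_left _ _
    nlinarith
  · have hts : (0:ℝ) ≤ t ^ s := Real.rpow_nonneg ht s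
    have key : (δ * t ^ s / n) ^ n ≤ Real.exp (δ * t ^ s) := by
      have h2 : δ * t ^ s / n ≤ Real.exp (δ * t ^ s / n) := by
        have := Real.add_one_le_exp (δ * t ^ s / n)
        linarith
      calc (δ * t ^ s / n) ^ n ≤ Real.exp (δ * t ^ s / n) ^ n :=
            pow_le_pow_left₀ (by positivity) h2 n
        _ = Real.exp (δ * t ^ s) := by
            rw [← Real.exp_nat_mul, mul_div_cancel₀ _ hnpos.ne']
    have ht1 : t ≤ (t ^ s) ^ n := by
      calc t = t ^ (1:ℝ) := (Real.rpow_one t).symm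
        _ ≤ t ^ (s * n) := Real.rpow_le_rpow_of_exponent_le h1 hns
        _ = (t ^ s) ^ (n : ℝ) := by rw [Real.rpow_mul ht]
        _ = (t ^ s) ^ n := Real.rpow_natCast _ n
    calc t ≤ (t ^ s) ^ n := ht1
      _ = (n / δ) ^ n * (δ * t ^ s / n) ^ n := by
          rw [← mul_pow]
          congr 1
          field_simp
      _ ≤ (n / δ) ^ n * Real.exp (δ * t ^ s) := by gcongr
      _ ≤ max 1 ((n / δ) ^ n) * Real.exp (δ * t ^ s) := by
          gcongr; exact le_max_right _ _


noncomputable abbrev E3 := EuclideanSpace ℝ (Fin 3)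

lemma aux_main (a σ : ℝ) (ha : 0 < a) (hσ : 1 < σ) (c₁ : ℝ) (hc₁ : 0 < c₁)
    (hpt : ∀ t : ℝ, 0 < t → Real.exp (a / σ * t ^ (1 / σ)) ≤
      c₁ * (t⁻¹ * Real.exp (a / Real.sqrt σ * t ^ (1 / σ))))
    (v : E3 → EuclideanSpace ℂ (Fin 3)) (hv : StronglyMeasurable v)
    (hA : Integrable (fun ξ : E3 => ‖ξ‖⁻¹ * Real.exp ((a / Real.sqrt σ) * ‖ξ‖ ^ (1 / σ)) * ‖v ξ‖))
    (hB : Integrable (fun ξ : E3 => ‖ξ‖⁻¹ * Real.exp (a * ‖ξ‖ ^ (1 / σ)) * ‖v ξ‖))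
    (hC : Integrable (fun ξ : E3 => ‖ξ‖ * Real.exp (a * ‖ξ‖ ^ (1 / σ)) * ‖v ξ‖)) :
    (∫ ξ : E3, Real.exp (a * ‖ξ‖ ^ (1 / σ)) * ∫ η, ‖v (ξ - η)‖ * ‖v η‖) ≤
      2 * c₁ * (∫ ξ : E3, ‖ξ‖⁻¹ * Real.exp ((a / Real.sqrt σ) * ‖ξ‖ ^ (1 / σ)) * ‖v ξ‖) *
        (∫ ξ : E3, ‖ξ‖⁻¹ * Real.exp (a * ‖ξ‖ ^ (1 / σ)) * ‖v ξ‖) ^ ((1 : ℝ) / 2) *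
        (∫ ξ : E3, ‖ξ‖ * Real.exp (a * ‖ξ‖ ^ (1 / σ)) * ‖v ξ‖) ^ ((1 : ℝ) / 2) := by
  have hσ0 : (0:ℝ) < σ := by linarith
  have hnvm : Measurable fun ξ : E3 => ‖v ξ‖ := hv.norm.measurable
  set A := ∫ ξ : E3, ‖ξ‖⁻¹ * Real.exp ((a / Real.sqrt σ) * ‖ξ‖ ^ (1 / σ)) * ‖v ξ‖ with hAdef
  set B := ∫ ξ : E3, ‖ξ‖⁻¹ * Real.exp (a * ‖ξ‖ ^ (1 / σ)) * ‖v ξ‖ with hBdef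
  set C := ∫ ξ : E3, ‖ξ‖ * Real.exp (a * ‖ξ‖ ^ (1 / σ)) * ‖v ξ‖ with hCdef
  have hA0 : 0 ≤ A := integral_nonneg fun ξ => by positivity
  have hB0 : 0 ≤ B := integral_nonneg fun ξ => by positivity
  have hC0 : 0 ≤ C := integral_nonneg fun ξ => by positivity
  have hmexp : ∀ b : ℝ, Measurable fun ξ : E3 => Real.exp (b * ‖ξ‖ ^ (1 / σ)) := by
    intro b; fun_prop
  set F : E3 → ℝ≥0∞ := fun ξ => ENNReal.ofReal (Real.exp (a / σ * ‖ξ‖ ^ (1 / σ)) * ‖v ξ‖)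
    with hFdef
  set G : E3 → ℝ≥0∞ := fun ξ => ENNReal.ofReal (Real.exp (a * ‖ξ‖ ^ (1 / σ)) * ‖v ξ‖)
    with hGdef
  have hFm : Measurable F := ((hmexp (a / σ)).mul hnvm).ennreal_ofReal
  have hGm : Measurable G := ((hmexp a).mul hnvm).ennreal_ofReal
  have hne : ∀ᵐ ξ : E3, ξ ≠ (0 : E3) := by
    rw [ae_iff]
    simp [measure_singleton (0 : E3)]
  -- bound on ∫⁻ F
  have hFle : (∫⁻ ξ, F ξ) ≤ ENNReal.ofReal (c₁ * A) := by
    have hae : ∀ᵐ ξ : E3, F ξ ≤ ENNReal.ofReal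
        (c₁ * (‖ξ‖⁻¹ * Real.exp ((a / Real.sqrt σ) * ‖ξ‖ ^ (1 / σ)) * ‖v ξ‖)) := by
      filter_upwards [hne] with ξ hξ
      simp only [hFdef]
      apply ENNReal.ofReal_le_ofReal
      have h0 : 0 < ‖ξ‖ := norm_pos_iff.mpr hξ
      have h1 := hpt ‖ξ‖ h0
      calc Real.exp (a / σ * ‖ξ‖ ^ (1 / σ)) * ‖v ξ‖
          ≤ (c₁ * (‖ξ‖⁻¹ * Real.exp (a / Real.sqrt σ * ‖ξ‖ ^ (1 / σ)))) * ‖v ξ‖ :=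
            mul_le_mul_of_nonneg_right h1 (norm_nonneg _)
        _ = c₁ * (‖ξ‖⁻¹ * Real.exp ((a / Real.sqrt σ) * ‖ξ‖ ^ (1 / σ)) * ‖v ξ‖) := by ring
    calc (∫⁻ ξ, F ξ)
        ≤ ∫⁻ ξ : E3, ENNReal.ofReal
            (c₁ * (‖ξ‖⁻¹ * Real.exp ((a / Real.sqrt σ) * ‖ξ‖ ^ (1 / σ)) * ‖v ξ‖)) :=
          lintegral_mono_ae hae
      _ = ENNReal.ofReal
            (∫ ξ : E3, c₁ * (‖ξ‖⁻¹ * Real.exp ((a / Real.sqrt σ) * ‖ξ‖ ^ (1 / σ)) * ‖v ξ‖)) :=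
          (ofReal_integral_eq_lintegral_ofReal (hA.const_mul c₁)
            (Filter.Eventually.of_forall fun ξ => by positivity)).symm
      _ = ENNReal.ofReal (c₁ * A) := by rw [integral_const_mul]
  -- bound on ∫⁻ G
  set P : E3 → ℝ≥0∞ := fun ξ =>
    ENNReal.ofReal (‖ξ‖⁻¹ * Real.exp (a * ‖ξ‖ ^ (1 / σ)) * ‖v ξ‖) with hPdef
  set Q : E3 → ℝ≥0∞ := fun ξ =>
    ENNReal.ofReal (‖ξ‖ * Real.exp (a * ‖ξ‖ ^ (1 / σ)) * ‖v ξ‖) with hQdef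
  have hPm : Measurable P := by
    apply Measurable.ennreal_ofReal
    exact (measurable_norm.inv.mul (hmexp a)).mul hnvm
  have hQm : Measurable Q := by
    apply Measurable.ennreal_ofReal
    exact (measurable_norm.mul (hmexp a)).mul hnvm
  have hPB : (∫⁻ ξ, P ξ) = ENNReal.ofReal B :=
    (ofReal_integral_eq_lintegral_ofReal hB
      (Filter.Eventually.of_forall fun ξ => by positivity)).symm
  have hQC : (∫⁻ ξ, Q ξ) = ENNReal.ofReal C :=
    (ofReal_integral_eq_lintegral_ofReal hC
      (Filter.Eventually.of_forall fun ξ => by positivity)).symm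
  have hGle : (∫⁻ ξ, G ξ) ≤ ENNReal.ofReal B ^ ((1:ℝ)/2) * ENNReal.ofReal C ^ ((1:ℝ)/2) := by
    have hptw : ∀ᵐ ξ : E3, G ξ ≤ P ξ ^ ((1:ℝ)/2) * Q ξ ^ ((1:ℝ)/2) := by
      filter_upwards [hne] with ξ hξ
      have h0 : 0 < ‖ξ‖ := norm_pos_iff.mpr hξ
      have hprod : P ξ * Q ξ = G ξ * G ξ := by
        simp only [hPdef, hQdef, hGdef]
        rw [← ENNReal.ofReal_mul (by positivity), ← ENNReal.ofReal_mul (by positivity)]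
        congr 1
        field_simp
      have h2 : (G ξ) ^ (2:ℝ) = G ξ * G ξ := by
        rw [show (2:ℝ) = ((2:ℕ):ℝ) by norm_num, ENNReal.rpow_natCast, pow_two]
      have : G ξ = P ξ ^ ((1:ℝ)/2) * Q ξ ^ ((1:ℝ)/2) := by
        calc G ξ = (G ξ) ^ ((1:ℝ)) := (ENNReal.rpow_one _).symm
          _ = (G ξ) ^ ((2:ℝ) * ((1:ℝ)/2)) := by norm_num
          _ = ((G ξ) ^ (2:ℝ)) ^ ((1:ℝ)/2) := ENNReal.rpow_mul _ 2 _
          _ = (G ξ * G ξ) ^ ((1:ℝ)/2) := by rw [h2]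
          _ = (P ξ * Q ξ) ^ ((1:ℝ)/2) := by rw [hprod]
          _ = P ξ ^ ((1:ℝ)/2) * Q ξ ^ ((1:ℝ)/2) :=
            ENNReal.mul_rpow_of_nonneg _ _ (by norm_num)
      exact this.le
    have hconj : Real.HolderConjugate 2 2 := Real.HolderConjugate.two_two
    calc (∫⁻ ξ, G ξ) ≤ ∫⁻ ξ, P ξ ^ ((1:ℝ)/2) * Q ξ ^ ((1:ℝ)/2) := lintegral_mono_ae hptw
      _ = ∫⁻ ξ, ((fun ξ : E3 => P ξ ^ ((1:ℝ)/2)) * fun ξ : E3 => Q ξ ^ ((1:ℝ)/2)) ξ := rfl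
      _ ≤ (∫⁻ ξ, (P ξ ^ ((1:ℝ)/2)) ^ (2:ℝ)) ^ (1/(2:ℝ)) *
          (∫⁻ ξ, (Q ξ ^ ((1:ℝ)/2)) ^ (2:ℝ)) ^ (1/(2:ℝ)) :=
          ENNReal.lintegral_mul_le_Lp_mul_Lq volume hconj
            ((hPm.pow_const _).aemeasurable) ((hQm.pow_const _).aemeasurable)
      _ = (∫⁻ ξ, P ξ) ^ (1/(2:ℝ)) * (∫⁻ ξ, Q ξ) ^ (1/(2:ℝ)) := by
          rw [show (∫⁻ ξ, (P ξ ^ ((1:ℝ)/2)) ^ (2:ℝ)) = ∫⁻ ξ, P ξ from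
              lintegral_congr fun ξ => by rw [← ENNReal.rpow_mul]; norm_num,
            show (∫⁻ ξ, (Q ξ ^ ((1:ℝ)/2)) ^ (2:ℝ)) = ∫⁻ ξ, Q ξ from
              lintegral_congr fun ξ => by rw [← ENNReal.rpow_mul]; norm_num]
      _ = ENNReal.ofReal B ^ ((1:ℝ)/2) * ENNReal.ofReal C ^ ((1:ℝ)/2) := by
          rw [hPB, hQC]
  -- translation-invariance computation of the cross terms
  have hterm : ∀ (f g : E3 → ℝ≥0∞), Measurable f → Measurable g →
      (∫⁻ ξ : E3, ∫⁻ η : E3, f (ξ - η) * g η) = (∫⁻ x, f x) * ∫⁻ x, g x := by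
    intro f g hf hg
    rw [lintegral_lintegral_swap
      (((hf.comp (measurable_fst.sub measurable_snd)).mul (hg.comp measurable_snd)).aemeasurable)]
    have h1 : ∀ η : E3, (∫⁻ ξ : E3, f (ξ - η) * g η) = (∫⁻ x, f x) * g η := by
      intro η
      have hfc : Measurable fun ξ : E3 => f (ξ - η) :=
        hf.comp (measurable_id.sub measurable_const)
      rw [lintegral_mul_const _ hfc]
      congr 1
      exact (measurePreserving_sub_right volume η).lintegral_comp hf
    simp_rw [h1]
    rw [lintegral_const_mul _ hg]
  -- the double lintegral
  set T := ∫⁻ ξ : E3, ∫⁻ η : E3,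
      ENNReal.ofReal (Real.exp (a * ‖ξ‖ ^ (1 / σ)) * (‖v (ξ - η)‖ * ‖v η‖)) with hTdef
  have hsplit : ∀ ξ η : E3,
      ENNReal.ofReal (Real.exp (a * ‖ξ‖ ^ (1 / σ)) * (‖v (ξ - η)‖ * ‖v η‖)) ≤
        F (ξ - η) * G η + G (ξ - η) * F η := by
    intro ξ η
    have hnorm : ‖ξ‖ ≤ ‖ξ - η‖ + ‖η‖ := by
      simpa using norm_add_le (ξ - η) η
    have hexp := aux_exp_split ha hσ (norm_nonneg (ξ - η)) (norm_nonneg η) (norm_nonneg ξ) hnorm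
    have h1 : Real.exp (a * ‖ξ‖ ^ (1 / σ)) * (‖v (ξ - η)‖ * ‖v η‖) ≤
        Real.exp (a / σ * ‖ξ - η‖ ^ (1 / σ)) * ‖v (ξ - η)‖ *
          (Real.exp (a * ‖η‖ ^ (1 / σ)) * ‖v η‖) +
        Real.exp (a * ‖ξ - η‖ ^ (1 / σ)) * ‖v (ξ - η)‖ *
          (Real.exp (a / σ * ‖η‖ ^ (1 / σ)) * ‖v η‖) := by
      have hnn : (0:ℝ) ≤ ‖v (ξ - η)‖ * ‖v η‖ := by positivity
      refine le_trans (mul_le_mul_of_nonneg_right hexp hnn) (le_of_eq (by ring))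
    calc ENNReal.ofReal (Real.exp (a * ‖ξ‖ ^ (1 / σ)) * (‖v (ξ - η)‖ * ‖v η‖))
        ≤ ENNReal.ofReal (Real.exp (a / σ * ‖ξ - η‖ ^ (1 / σ)) * ‖v (ξ - η)‖ *
            (Real.exp (a * ‖η‖ ^ (1 / σ)) * ‖v η‖) +
          Real.exp (a * ‖ξ - η‖ ^ (1 / σ)) * ‖v (ξ - η)‖ *
            (Real.exp (a / σ * ‖η‖ ^ (1 / σ)) * ‖v η‖)) := ENNReal.ofReal_le_ofReal h1
      _ = ENNReal.ofReal (Real.exp (a / σ * ‖ξ - η‖ ^ (1 / σ)) * ‖v (ξ - η)‖) *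
            ENNReal.ofReal (Real.exp (a * ‖η‖ ^ (1 / σ)) * ‖v η‖) +
          ENNReal.ofReal (Real.exp (a * ‖ξ - η‖ ^ (1 / σ)) * ‖v (ξ - η)‖) *
            ENNReal.ofReal (Real.exp (a / σ * ‖η‖ ^ (1 / σ)) * ‖v η‖) := by
          rw [ENNReal.ofReal_add (by positivity) (by positivity)]
          congr 1 <;> exact ENNReal.ofReal_mul (by positivity)
      _ = F (ξ - η) * G η + G (ξ - η) * F η := by
          simp only [hFdef, hGdef]
  set D2 := 2 * (ENNReal.ofReal (c₁ * A) *
      (ENNReal.ofReal B ^ ((1:ℝ)/2) * ENNReal.ofReal C ^ ((1:ℝ)/2))) with hD2def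
  have hT2D : T ≤ D2 := by
    calc T ≤ ∫⁻ ξ : E3, ∫⁻ η : E3, (F (ξ - η) * G η + G (ξ - η) * F η) :=
          lintegral_mono fun ξ => lintegral_mono fun η => hsplit ξ η
      _ = ∫⁻ ξ : E3, ((∫⁻ η : E3, F (ξ - η) * G η) + ∫⁻ η : E3, G (ξ - η) * F η) := by
          apply lintegral_congr fun ξ => ?_
          have hm1 : Measurable fun η : E3 => F (ξ - η) * G η :=
            (hFm.comp (measurable_const.sub measurable_id)).mul hGm
          exact lintegral_add_left hm1 _
      _ = (∫⁻ ξ : E3, ∫⁻ η : E3, F (ξ - η) * G η) +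
          ∫⁻ ξ : E3, ∫⁻ η : E3, G (ξ - η) * F η := by
          have hm2 : Measurable fun ξ : E3 => ∫⁻ η : E3, F (ξ - η) * G η :=
            Measurable.lintegral_prod_right
              ((hFm.comp (measurable_fst.sub measurable_snd)).mul (hGm.comp measurable_snd))
          exact lintegral_add_left hm2 _
      _ = (∫⁻ x, F x) * (∫⁻ x, G x) + (∫⁻ x, G x) * (∫⁻ x, F x) := by
          rw [hterm F G hFm hGm, hterm G F hGm hFm]
      _ = 2 * ((∫⁻ x, F x) * (∫⁻ x, G x)) := by ring
      _ ≤ D2 := by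
          rw [hD2def]
          exact mul_le_mul_right (mul_le_mul' hFle hGle) 2
  have hDne : D2 ≠ ⊤ := by
    rw [hD2def]
    apply ENNReal.mul_ne_top (by norm_num)
    apply ENNReal.mul_ne_top ENNReal.ofReal_ne_top
    exact ENNReal.mul_ne_top
      (ENNReal.rpow_ne_top_of_nonneg (by norm_num) ENNReal.ofReal_ne_top)
      (ENNReal.rpow_ne_top_of_nonneg (by norm_num) ENNReal.ofReal_ne_top)
  have hgoal_eq : D2.toReal = 2 * c₁ * A * B ^ ((1:ℝ)/2) * C ^ ((1:ℝ)/2) := by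
    rw [hD2def, ENNReal.toReal_mul, ENNReal.toReal_mul, ENNReal.toReal_mul,
      ENNReal.toReal_ofReal (mul_nonneg hc₁.le hA0), ← ENNReal.toReal_rpow,
      ← ENNReal.toReal_rpow, ENNReal.toReal_ofReal hB0, ENNReal.toReal_ofReal hC0,
      ENNReal.toReal_ofNat]
    ring
  have step1 : ∀ ξ : E3, Real.exp (a * ‖ξ‖ ^ (1 / σ)) * ∫ η, ‖v (ξ - η)‖ * ‖v η‖ ≤
      (∫⁻ η : E3, ENNReal.ofReal
        (Real.exp (a * ‖ξ‖ ^ (1 / σ)) * (‖v (ξ - η)‖ * ‖v η‖))).toReal := by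
    intro ξ
    have heq : Real.exp (a * ‖ξ‖ ^ (1 / σ)) * ∫ η, ‖v (ξ - η)‖ * ‖v η‖
        = ∫ η : E3, Real.exp (a * ‖ξ‖ ^ (1 / σ)) * (‖v (ξ - η)‖ * ‖v η‖) :=
      (integral_const_mul _ _).symm
    rw [heq]
    refine le_trans (Real.le_norm_self _) ?_
    refine le_trans (norm_integral_le_lintegral_norm _) ?_
    apply le_of_eq
    congr 1
    apply lintegral_congr fun η => ?_
    rw [Real.norm_of_nonneg (by positivity)]
  have hfinal : (∫ ξ : E3, Real.exp (a * ‖ξ‖ ^ (1 / σ)) * ∫ η, ‖v (ξ - η)‖ * ‖v η‖)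
      ≤ D2.toReal := by
    refine le_trans (Real.le_norm_self _) ?_
    refine le_trans (norm_integral_le_lintegral_norm _) ?_
    apply ENNReal.toReal_mono hDne
    refine le_trans ?_ hT2D
    rw [hTdef]
    apply lintegral_mono fun ξ => ?_
    have hg0 : 0 ≤ Real.exp (a * ‖ξ‖ ^ (1 / σ)) * ∫ η, ‖v (ξ - η)‖ * ‖v η‖ :=
      mul_nonneg (Real.exp_pos _).le (integral_nonneg fun η => by positivity)
    rw [Real.norm_of_nonneg hg0]
    exact le_trans (ENNReal.ofReal_le_ofReal (step1 ξ)) ENNReal.ofReal_toReal_le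
  calc (∫ ξ : E3, Real.exp (a * ‖ξ‖ ^ (1 / σ)) * ∫ η, ‖v (ξ - η)‖ * ‖v η‖)
      ≤ D2.toReal := hfinal
    _ = 2 * c₁ * A * B ^ ((1:ℝ)/2) * C ^ ((1:ℝ)/2) := hgoal_eq

/-- `‖u ⊗ u‖_{Z^0_{a,σ}} ≤ c ‖u‖_{Z^{-1}_{a/√σ,σ}} ‖u‖_{Z^{-1}_{a,σ}}^{1/2} ‖Δu‖_{Z^{-1}_{a,σ}}^{1/2}`,
stated on the Fourier side: `u` stands for the Fourier transform `û` of the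
divergence-free vector field, `|(u ⊗ u)^(ξ)|` is dominated by the convolution
`∫ η, ‖û(ξ-η)‖‖û(η)‖`, and `‖Δu‖_{Z^{-1}_{a,σ}} = ∫ |ξ| e^{a|ξ|^{1/σ}}|û| dξ`. -/
theorem tensor_product_gevrey_bound (a σ : ℝ) (ha : 0 < a) (hσ : 1 < σ) :
    ∃ c > 0, ∀ u : EuclideanSpace ℝ (Fin 3) → EuclideanSpace ℂ (Fin 3),
      AEStronglyMeasurable u (volume : Measure (EuclideanSpace ℝ (Fin 3))) →
      (∀ ξ : EuclideanSpace ℝ (Fin 3), ∑ i, (ξ i : ℂ) * u ξ i = 0) →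
      (Integrable fun ξ => ‖ξ‖⁻¹ * Real.exp ((a / Real.sqrt σ) * ‖ξ‖ ^ (1 / σ)) * ‖u ξ‖) →
      (Integrable fun ξ => ‖ξ‖⁻¹ * Real.exp (a * ‖ξ‖ ^ (1 / σ)) * ‖u ξ‖) →
      (Integrable fun ξ => ‖ξ‖ * Real.exp (a * ‖ξ‖ ^ (1 / σ)) * ‖u ξ‖) →
      ∫ ξ, Real.exp (a * ‖ξ‖ ^ (1 / σ)) * ∫ η, ‖u (ξ - η)‖ * ‖u η‖ ≤
        c * (∫ ξ, ‖ξ‖⁻¹ * Real.exp ((a / Real.sqrt σ) * ‖ξ‖ ^ (1 / σ)) * ‖u ξ‖) *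
          (∫ ξ, ‖ξ‖⁻¹ * Real.exp (a * ‖ξ‖ ^ (1 / σ)) * ‖u ξ‖) ^ ((1 : ℝ) / 2) *
          (∫ ξ, ‖ξ‖ * Real.exp (a * ‖ξ‖ ^ (1 / σ)) * ‖u ξ‖) ^ ((1 : ℝ) / 2) := by
  have hσ0 : (0:ℝ) < σ := by linarith
  have hsqrt : 0 < Real.sqrt σ := Real.sqrt_pos.mpr hσ0
  have hsqlt : Real.sqrt σ < σ := by
    rw [Real.sqrt_lt' hσ0]
    nlinarith
  have hδ : 0 < a / Real.sqrt σ - a / σ := by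
    have h := div_lt_div_of_pos_left ha hsqrt hsqlt
    linarith
  obtain ⟨c₁, hc₁, hgrow⟩ := aux_growth hδ (show (0:ℝ) < 1 / σ by positivity)
  refine ⟨2 * c₁, by positivity, ?_⟩
  intro u hu _hdiv hA hB hC
  have hpt : ∀ t : ℝ, 0 < t → Real.exp (a / σ * t ^ (1 / σ)) ≤
      c₁ * (t⁻¹ * Real.exp (a / Real.sqrt σ * t ^ (1 / σ))) := by
    intro t ht
    have h1 := hgrow t ht.le
    have h2 : Real.exp (a / Real.sqrt σ * t ^ (1 / σ))
        = Real.exp ((a / Real.sqrt σ - a / σ) * t ^ (1 / σ)) *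
          Real.exp (a / σ * t ^ (1 / σ)) := by
      rw [← Real.exp_add]
      congr 1
      ring
    calc Real.exp (a / σ * t ^ (1 / σ))
        = t⁻¹ * (t * Real.exp (a / σ * t ^ (1 / σ))) := by
          rw [inv_mul_cancel_left₀ ht.ne']
      _ ≤ t⁻¹ * (c₁ * Real.exp ((a / Real.sqrt σ - a / σ) * t ^ (1 / σ)) *
            Real.exp (a / σ * t ^ (1 / σ))) := by
          gcongr
      _ = c₁ * (t⁻¹ * Real.exp (a / Real.sqrt σ * t ^ (1 / σ))) := by
          rw [h2]; ring
  set v := hu.mk u with hvdef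
  have hv : StronglyMeasurable v := hu.stronglyMeasurable_mk
  have huv : u =ᵐ[(volume : Measure E3)] v := hu.ae_eq_mk
  have hAv : Integrable
      (fun ξ : E3 => ‖ξ‖⁻¹ * Real.exp ((a / Real.sqrt σ) * ‖ξ‖ ^ (1 / σ)) * ‖v ξ‖) :=
    hA.congr (by filter_upwards [huv] with ξ h; rw [h])
  have hBv : Integrable
      (fun ξ : E3 => ‖ξ‖⁻¹ * Real.exp (a * ‖ξ‖ ^ (1 / σ)) * ‖v ξ‖) :=
    hB.congr (by filter_upwards [huv] with ξ h; rw [h])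
  have hCv : Integrable
      (fun ξ : E3 => ‖ξ‖ * Real.exp (a * ‖ξ‖ ^ (1 / σ)) * ‖v ξ‖) :=
    hC.congr (by filter_upwards [huv] with ξ h; rw [h])
  have hAeq : (∫ ξ : E3, ‖ξ‖⁻¹ * Real.exp ((a / Real.sqrt σ) * ‖ξ‖ ^ (1 / σ)) * ‖u ξ‖)
      = ∫ ξ : E3, ‖ξ‖⁻¹ * Real.exp ((a / Real.sqrt σ) * ‖ξ‖ ^ (1 / σ)) * ‖v ξ‖ :=
    integral_congr_ae (by filter_upwards [huv] with ξ h; rw [h])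
  have hBeq : (∫ ξ : E3, ‖ξ‖⁻¹ * Real.exp (a * ‖ξ‖ ^ (1 / σ)) * ‖u ξ‖)
      = ∫ ξ : E3, ‖ξ‖⁻¹ * Real.exp (a * ‖ξ‖ ^ (1 / σ)) * ‖v ξ‖ :=
    integral_congr_ae (by filter_upwards [huv] with ξ h; rw [h])
  have hCeq : (∫ ξ : E3, ‖ξ‖ * Real.exp (a * ‖ξ‖ ^ (1 / σ)) * ‖u ξ‖)
      = ∫ ξ : E3, ‖ξ‖ * Real.exp (a * ‖ξ‖ ^ (1 / σ)) * ‖v ξ‖ :=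
    integral_congr_ae (by filter_upwards [huv] with ξ h; rw [h])
  have hsubeq : ∀ ξ : E3, (∫ η, ‖u (ξ - η)‖ * ‖u η‖) = ∫ η, ‖v (ξ - η)‖ * ‖v η‖ := by
    intro ξ
    apply integral_congr_ae
    have hmp := Measure.measurePreserving_sub_left (volume : Measure E3) ξ
    have hmap : u =ᵐ[(volume : Measure E3).map (fun η : E3 => ξ - η)] v := by
      rw [hmp.map_eq]; exact huv
    have hcomp : (fun η : E3 => u (ξ - η)) =ᵐ[(volume : Measure E3)] fun η => v (ξ - η) := by
      have := ae_eq_comp hmp.measurable.aemeasurable hmap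
      exact this
    filter_upwards [hcomp, huv] with η h1 h2
    rw [h1, h2]
  have hLeq : (∫ ξ : E3, Real.exp (a * ‖ξ‖ ^ (1 / σ)) * ∫ η, ‖u (ξ - η)‖ * ‖u η‖)
      = ∫ ξ : E3, Real.exp (a * ‖ξ‖ ^ (1 / σ)) * ∫ η, ‖v (ξ - η)‖ * ‖v η‖ :=
    integral_congr_ae (Filter.Eventually.of_forall fun ξ => by beta_reduce; rw [hsubeq ξ])
  rw [hLeq, hAeq, hBeq, hCeq]
  exact aux_main a σ ha hσ c₁ hc₁ hpt v hv hAv hBv hCv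
end
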